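/- Let μ(t) = exp(−1/t²) for t > 0 and μ(t) = 0 for t ≤ 0, let r ≥ r₀ for suitable r₀ > 1, and set a(t) = μ(t)cosh(t) + r, α(t) = a(t)/cosh(t) = μ(t) + r/cosh(t). Then there exists r₀ > 1 such that for all r ≥ r₀: μ'(t) − μ(t)tanh(t) − 2r·tanh(t)/cosh(t) ≤ 0 for all t > 0; consequently a'(t)(a'(t) − 2a(t)tanh(t)) ≤ 0 for all t and hence (α'(t))² − α(t)² < 0 for all t. -/

import Mathlib

open Real Filter

private lemma exp_aux {x : ℝ} (hx : 0 ≤ x) : x ^ 2 / 4 ≤ Real.exp x := by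
  have h := Real.add_one_le_exp (x / 2)
  have h2 : Real.exp x = Real.exp (x / 2) ^ 2 := by
    rw [sq, ← Real.exp_add]; ring_nf
  nlinarith [Real.exp_pos (x / 2)]

private lemma exp_neg_le {t : ℝ} (ht : 0 < t) : Real.exp (-1 / t ^ 2) ≤ 4 * t ^ 4 := by
  have h2 := exp_aux (le_of_lt (show (0:ℝ) < 1 / t ^ 2 by positivity))
  have key : Real.exp (-1 / t ^ 2) * Real.exp (1 / t ^ 2) = 1 := by
    rw [← Real.exp_add, show -1 / t^2 + 1/t^2 = 0 by ring, Real.exp_zero]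
  have hE : 0 < Real.exp (-1 / t ^ 2) := Real.exp_pos _
  have h3 : (1 / t ^ 2) ^ 2 / 4 = 1 / (4 * t ^ 4) := by field_simp
  rw [h3] at h2
  have h4 : Real.exp (-1 / t ^ 2) * (1 / (4 * t ^ 4)) ≤ 1 := by
    calc _ ≤ Real.exp (-1 / t ^ 2) * Real.exp (1 / t ^ 2) := mul_le_mul_of_nonneg_left h2 hE.le
      _ = 1 := key
  rw [mul_one_div, div_le_one (by positivity)] at h4
  exact h4

private lemma mu_hasDeriv (μ : ℝ → ℝ)
    (hμ : ∀ t, μ t = if 0 < t then Real.exp (-1 / t ^ 2) else 0) (t : ℝ) :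
    HasDerivAt μ (if 0 < t then 2 / t ^ 3 * Real.exp (-1 / t ^ 2) else 0) t := by
  rcases lt_trichotomy t 0 with ht | rfl | ht
  · rw [if_neg (by linarith)]
    have hev : μ =ᶠ[nhds t] fun _ => (0:ℝ) := by
      filter_upwards [eventually_lt_nhds ht] with s hs
      rw [hμ s, if_neg (by linarith)]
    exact (hasDerivAt_const t (0:ℝ)).congr_of_eventuallyEq hev
  · rw [if_neg (lt_irrefl 0)]
    rw [hasDerivAt_iff_tendsto_slope]
    have hμ0 : μ 0 = 0 := by rw [hμ 0, if_neg (lt_irrefl 0)]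
    apply squeeze_zero_norm (a := fun h : ℝ => 4 * |h| ^ 3)
    · intro h
      rcases le_or_gt h 0 with hh | hh
      · rcases eq_or_lt_of_le hh with rfl | hh'
        · simp [slope, hμ0]
        · have : μ h = 0 := by rw [hμ h, if_neg (by linarith)]
          simp [slope_def_field, this, hμ0]
      · have hμh : μ h = Real.exp (-1 / h ^ 2) := by rw [hμ h, if_pos hh]
        have h1 : 0 < Real.exp (-1 / h ^ 2) := Real.exp_pos _
        have h2 := exp_neg_le hh
        rw [slope_def_field, hμ0, hμh]
        rw [sub_zero, sub_zero, Real.norm_eq_abs,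
          abs_of_pos (show (0:ℝ) < Real.exp (-1 / h ^ 2) / h from by positivity),
          abs_of_pos hh, div_le_iff₀ hh]
        nlinarith
    · have : Filter.Tendsto (fun h : ℝ => 4 * |h| ^ 3) (nhds 0) (nhds 0) := by
        have := Continuous.tendsto' (f := fun h : ℝ => 4 * |h| ^ 3) (by fun_prop) 0 0 (by norm_num)
        exact this
      exact this.mono_left nhdsWithin_le_nhds
  · rw [if_pos ht]
    have hsq : HasDerivAt (fun s : ℝ => s ^ 2) (2 * t) t := by
      simpa using hasDerivAt_pow 2 t
    have hinv : HasDerivAt (fun s : ℝ => (s ^ 2)⁻¹) (-(2 * t) / (t ^ 2) ^ 2) t :=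
      hsq.inv (by positivity)
    have hneg : HasDerivAt (fun s : ℝ => -(s ^ 2)⁻¹) (2 * t / (t ^ 2) ^ 2) t := by
      have := hinv.neg
      rw [neg_div, neg_neg] at this
      exact this
    have heq : (fun s : ℝ => -(s ^ 2)⁻¹) = fun s : ℝ => -1 / s ^ 2 := by
      funext s; rw [neg_div, one_div]
    rw [heq] at hneg
    have hexp := hneg.exp
    have hev : μ =ᶠ[nhds t] fun s => Real.exp (-1 / s ^ 2) := by
      filter_upwards [eventually_gt_nhds ht] with s hs
      rw [hμ s, if_pos hs]
    have := hexp.congr_of_eventuallyEq hev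
    refine this.congr_deriv ?_
    have ht0 : t ≠ 0 := ht.ne'
    field_simp

private lemma cosh_two_le : Real.cosh 2 ≤ 5 := by
  rw [Real.cosh_eq]
  have h1 : Real.exp 2 ≤ 9 := by
    rw [show (2:ℝ) = 1 + 1 by norm_num, Real.exp_add]
    nlinarith [Real.exp_one_lt_d9, Real.exp_pos 1]
  have h2 : Real.exp (-2 : ℝ) ≤ 1 := Real.exp_le_one_iff.mpr (by norm_num)
  linarith

private lemma tanh_ge {t : ℝ} (ht : 2 ≤ t) : 1 / 4 ≤ Real.tanh t := by
  rw [Real.tanh_eq_sinh_div_cosh, le_div_iff₀ (Real.cosh_pos t)]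
  rw [Real.sinh_eq, Real.cosh_eq]
  have h1 : (3:ℝ) ≤ Real.exp t := by
    calc (3:ℝ) ≤ 2 + 1 := by norm_num
    _ ≤ Real.exp 2 := Real.add_one_le_exp 2
    _ ≤ Real.exp t := Real.exp_le_exp.mpr ht
  have h2 : Real.exp (-t) * Real.exp t = 1 := by rw [← Real.exp_add]; simp
  have h3 : 0 < Real.exp (-t) := Real.exp_pos _
  nlinarith

private lemma claim1 (μ : ℝ → ℝ)
    (hμ : ∀ t, μ t = if 0 < t then Real.exp (-1 / t ^ 2) else 0)
    {r t : ℝ} (hr : 100 ≤ r) (ht : 0 < t) :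
    2 / t ^ 3 * Real.exp (-1 / t ^ 2) - μ t * Real.tanh t
      - 2 * r * Real.tanh t / Real.cosh t ≤ 0 := by
  have hμt : μ t = Real.exp (-1 / t ^ 2) := by rw [hμ t, if_pos ht]
  set E := Real.exp (-1 / t ^ 2) with hEdef
  have hE : 0 < E := Real.exp_pos _
  have hE4 : E ≤ 4 * t ^ 4 := exp_neg_le ht
  have hc : 0 < Real.cosh t := Real.cosh_pos t
  have hs : t ≤ Real.sinh t := Real.self_le_sinh_iff.mpr ht.le
  have htanh : 0 ≤ Real.tanh t := by
    rw [Real.tanh_eq_sinh_div_cosh]; exact div_nonneg (by linarith) hc.le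
  rcases le_or_gt t 2 with h2 | h2
  · have hcosh5 : Real.cosh t ≤ 5 := by
      calc Real.cosh t ≤ Real.cosh 2 := by
            rw [Real.cosh_le_cosh, abs_of_pos ht, abs_of_pos (by norm_num : (0:ℝ) < 2)]
            exact h2
        _ ≤ 5 := cosh_two_le
    have h1 : 2 / t ^ 3 * E ≤ 8 * t := by
      rw [div_mul_eq_mul_div, div_le_iff₀ (by positivity)]
      nlinarith
    have hmt : 0 ≤ μ t * Real.tanh t := mul_nonneg (by rw [hμt]; exact hE.le) htanh
    have h3 : 8 * t ≤ 2 * r * Real.tanh t / Real.cosh t := by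
      rw [Real.tanh_eq_sinh_div_cosh]
      rw [show 2 * r * (Real.sinh t / Real.cosh t) / Real.cosh t
          = 2 * r * Real.sinh t / (Real.cosh t * Real.cosh t) by field_simp]
      rw [le_div_iff₀ (by positivity)]
      nlinarith [mul_le_mul hcosh5 hcosh5 hc.le (by norm_num : (0:ℝ) ≤ 5),
        mul_le_mul hr hs ht.le (by linarith : (0:ℝ) ≤ r), ht]
    linarith
  · have htanh4 : 1 / 4 ≤ Real.tanh t := tanh_ge h2.le
    have h1 : 2 / t ^ 3 * E ≤ E / 4 := by
      rw [div_mul_eq_mul_div, div_le_div_iff₀ (by positivity) (by norm_num)]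
      nlinarith [mul_le_mul_of_nonneg_left
        (pow_le_pow_left₀ (by norm_num : (0:ℝ) ≤ 2) h2.le 3) hE.le]
    have h4 : E / 4 ≤ μ t * Real.tanh t := by rw [hμt]; nlinarith
    have h5 : 0 ≤ 2 * r * Real.tanh t / Real.cosh t := by positivity
    linarith
private lemma alg_id {D A c s : ℝ} (hc : c ≠ 0) :
    ((D * c - A * s) / c ^ 2) ^ 2 - (A / c) ^ 2
      = (D * (D - 2 * A * (s / c)) * c ^ 2 - A ^ 2 * (c ^ 2 - s ^ 2)) / c ^ 4 := by
  field_simp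
  ring

theorem stmt_17 (μ : ℝ → ℝ)
    (hμ : ∀ t, μ t = if 0 < t then Real.exp (-1 / t ^ 2) else 0) :
    ∃ r₀ : ℝ, 1 < r₀ ∧ ∀ r ≥ r₀,
      (∀ t > (0 : ℝ),
        deriv μ t - μ t * Real.tanh t - 2 * r * Real.tanh t / Real.cosh t ≤ 0) ∧
      (∀ t, deriv (fun s => μ s * Real.cosh s + r) t *
          (deriv (fun s => μ s * Real.cosh s + r) t
            - 2 * (μ t * Real.cosh t + r) * Real.tanh t) ≤ 0) ∧
      (∀ t, (deriv (fun s => (μ s * Real.cosh s + r) / Real.cosh s) t) ^ 2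
          - ((μ t * Real.cosh t + r) / Real.cosh t) ^ 2 < 0) := by
  refine ⟨100, by norm_num, fun r hr => ?_⟩
  have hr100 : (100:ℝ) ≤ r := hr
  have hD := mu_hasDeriv μ hμ
  have ha : ∀ t : ℝ, HasDerivAt (fun s => μ s * Real.cosh s + r)
      ((if 0 < t then 2 / t ^ 3 * Real.exp (-1 / t ^ 2) else 0) * Real.cosh t
        + μ t * Real.sinh t) t := fun t =>
    ((hD t).mul (Real.hasDerivAt_cosh t)).add_const r
  have key : ∀ t : ℝ,
      ((if 0 < t then 2 / t ^ 3 * Real.exp (-1 / t ^ 2) else 0) * Real.cosh t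
          + μ t * Real.sinh t) *
        (((if 0 < t then 2 / t ^ 3 * Real.exp (-1 / t ^ 2) else 0) * Real.cosh t
          + μ t * Real.sinh t)
          - 2 * (μ t * Real.cosh t + r) * Real.tanh t) ≤ 0 := by
    intro t
    rcases le_or_gt t 0 with ht | ht
    · have hμt : μ t = 0 := by rw [hμ t, if_neg (not_lt.mpr ht)]
      rw [if_neg (not_lt.mpr ht), hμt]
      simp
    · rw [if_pos ht]
      have hc := Real.cosh_pos t
      have hs : 0 ≤ Real.sinh t := Real.sinh_nonneg_iff.mpr ht.le
      have hμt : 0 ≤ μ t := by rw [hμ t, if_pos ht]; positivity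
      have h1 : 0 ≤ 2 / t ^ 3 * Real.exp (-1 / t ^ 2) * Real.cosh t
          + μ t * Real.sinh t := by positivity
      have heq : 2 / t ^ 3 * Real.exp (-1 / t ^ 2) * Real.cosh t + μ t * Real.sinh t
            - 2 * (μ t * Real.cosh t + r) * Real.tanh t
          = Real.cosh t * (2 / t ^ 3 * Real.exp (-1 / t ^ 2) - μ t * Real.tanh t
            - 2 * r * Real.tanh t / Real.cosh t) := by
        rw [Real.tanh_eq_sinh_div_cosh]
        field_simp
        ring
      have h2 : 2 / t ^ 3 * Real.exp (-1 / t ^ 2) * Real.cosh t + μ t * Real.sinh t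
            - 2 * (μ t * Real.cosh t + r) * Real.tanh t ≤ 0 := by
        rw [heq]
        exact mul_nonpos_of_nonneg_of_nonpos hc.le (claim1 μ hμ hr100 ht)
      exact mul_nonpos_of_nonneg_of_nonpos h1 h2
  refine ⟨fun t ht => ?_, fun t => ?_, fun t => ?_⟩
  · rw [(hD t).deriv, if_pos ht]
    exact claim1 μ hμ hr100 ht
  · rw [(ha t).deriv]
    exact key t
  · have hc := Real.cosh_pos t
    have hαd := (ha t).div (Real.hasDerivAt_cosh t) (ne_of_gt hc)
    have hApos : 0 < μ t * Real.cosh t + r := by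
      have hμt : 0 ≤ μ t := by
        rw [hμ t]; split
        · positivity
        · exact le_rfl
      nlinarith
    have hcs : Real.cosh t ^ 2 - Real.sinh t ^ 2 = 1 := by
      have := Real.cosh_sq t; linarith
    rw [show (fun s => (μ s * Real.cosh s + r) / Real.cosh s) = ((fun s => μ s * Real.cosh s + r) / Real.cosh) from rfl, hαd.deriv, alg_id (ne_of_gt hc), hcs]
    apply div_neg_of_neg_of_pos _ (by positivity)
    have hkey := key t
    rw [Real.tanh_eq_sinh_div_cosh] at hkey
    nlinarith [mul_nonpos_of_nonpos_of_nonneg hkey (sq_nonneg (Real.cosh t)),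
      pow_pos hApos 2]
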